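/- For every p with 0 < p < 1 and every positive integer n, the Kolmogorov distance between the binomial distributions B_{n,p} and B_{n+1,p} equals p times the largest point mass of B_{n,p}: ρ(B_{n,p}, B_{n+1,p}) = p · max_{0 ≤ k ≤ n} b_k(n,p). -/

import Mathlib

open MeasureTheory ProbabilityTheory

/-- n-fold convolution power of a measure on ℝ (0-th power is the Dirac measure at 0). -/
noncomputable def convPow1 (F : Measure ℝ) : ℕ → Measure ℝ
  | 0 => Measure.dirac 0
  | (n + 1) => (convPow1 F n).conv F

/-- Kolmogorov (uniform) distance between measures on ℝ -/
noncomputable def kolm (F G : Measure ℝ) : ℝ :=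
  ⨆ x : ℝ, |(F (Set.Iic x)).toReal - (G (Set.Iic x)).toReal|

/-- the binomial distribution with parameters n, p, as a measure on ℝ -/
noncomputable def binom (n : ℕ) (p : ℝ) : Measure ℝ :=
  ∑ k ∈ Finset.range (n + 1),
    (ENNReal.ofReal ((n.choose k : ℝ) * p ^ k * (1 - p) ^ (n - k))) • Measure.dirac (k : ℝ)

namespace Stmt6Aux

noncomputable def bb (n : ℕ) (p : ℝ) (k : ℕ) : ℝ :=
  (n.choose k : ℝ) * p ^ k * (1 - p) ^ (n - k)

lemma bb_nonneg {p : ℝ} (hp0 : 0 ≤ p) (hp1 : p ≤ 1) (n k : ℕ) : 0 ≤ bb n p k := by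
  have h1 : (0:ℝ) ≤ 1 - p := by linarith
  have h2 : (0:ℝ) ≤ (n.choose k : ℝ) := by positivity
  unfold bb
  positivity

lemma bb_zero_of_gt {p : ℝ} {n k : ℕ} (h : n < k) : bb n p k = 0 := by
  simp [bb, Nat.choose_eq_zero_of_lt h]

lemma bb_rec (n : ℕ) (p : ℝ) (k : ℕ) :
    bb (n+1) p (k+1) = (1 - p) * bb n p (k+1) + p * bb n p k := by
  unfold bb
  rw [Nat.choose_succ_succ', Nat.succ_sub_succ]
  rcases le_or_gt (k+1) n with h | h
  · have hnk : n - k = (n - (k+1)) + 1 := by omega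
    rw [hnk]
    push_cast
    ring
  · have h1 : n.choose (k+1) = 0 := Nat.choose_eq_zero_of_lt h
    rw [h1]
    push_cast
    ring

lemma telescope (n : ℕ) (p : ℝ) (m : ℕ) :
    ∑ k ∈ Finset.range (m+1), (bb n p k - bb (n+1) p k) = p * bb n p m := by
  induction m with
  | zero =>
      rw [Finset.sum_range_one]
      simp only [bb, Nat.choose_zero_right, pow_zero, Nat.sub_zero, Nat.cast_one]
      ring
  | succ m ih =>
      rw [Finset.sum_range_succ, ih, bb_rec]
      ring

lemma binom_Iic (n : ℕ) (p : ℝ) (hp0 : 0 ≤ p) (hp1 : p ≤ 1) (x : ℝ) :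
    ((binom n p) (Set.Iic x)).toReal
      = ∑ k ∈ Finset.range (n+1), (if (k:ℝ) ≤ x then bb n p k else 0) := by
  rw [binom, MeasureTheory.Measure.finset_sum_apply]
  rw [ENNReal.toReal_sum]
  · refine Finset.sum_congr rfl fun k _ => ?_
    rw [Measure.smul_apply, Measure.dirac_apply' _ measurableSet_Iic, smul_eq_mul]
    by_cases h : (k:ℝ) ≤ x
    · simp only [Set.indicator_of_mem (Set.mem_Iic.mpr h), Pi.one_apply, mul_one, if_pos h]
      exact ENNReal.toReal_ofReal (bb_nonneg hp0 hp1 n k)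
    · simp [Set.indicator, Set.mem_Iic, h]
  · intro k _
    rw [Measure.smul_apply, Measure.dirac_apply' _ measurableSet_Iic, smul_eq_mul]
    by_cases h : (k:ℝ) ∈ Set.Iic x
    · simp [Set.indicator_of_mem h]
    · simp [Set.indicator_of_notMem h]

lemma key_iff {x : ℝ} (hx : 0 ≤ x) (k : ℕ) : ((k:ℝ) ≤ x ↔ k ≤ ⌊x⌋.toNat) := by
  have h0 : 0 ≤ ⌊x⌋ := Int.floor_nonneg.mpr hx
  constructor
  · intro h
    have : (k:ℤ) ≤ ⌊x⌋ := Int.le_floor.mpr (by exact_mod_cast h)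
    omega
  · intro h
    have h2 : (k:ℤ) ≤ ⌊x⌋ := by omega
    have : ((k:ℤ):ℝ) ≤ x := Int.le_floor.mp h2
    exact_mod_cast this

lemma sum_if_eq (n N : ℕ) (p : ℝ) (hnN : n ≤ N) {x : ℝ} (hx : 0 ≤ x) :
    ∑ k ∈ Finset.range (N+1), (if (k:ℝ) ≤ x then bb n p k else 0)
      = ∑ k ∈ Finset.range (⌊x⌋.toNat + 1), bb n p k := by
  set m := ⌊x⌋.toNat with hm
  have hk : ∀ k : ℕ, ((k:ℝ) ≤ x ↔ k ≤ m) := fun k => key_iff hx k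
  have hL : ∑ k ∈ Finset.range (N+1), (if (k:ℝ) ≤ x then bb n p k else 0)
      = ∑ k ∈ Finset.range (max N m + 1), (if k ≤ m then bb n p k else 0) := by
    rw [Finset.sum_congr rfl (fun k _ => by rw [if_congr (hk k) rfl rfl])]
    apply Finset.sum_subset
    · exact Finset.range_subset_range.mpr (by omega)
    · intro k _ hk2
      have : N < k := by
        simp only [Finset.mem_range] at hk2; omega
      split
      · exact bb_zero_of_gt (by omega)
      · rfl
  have hR : ∑ k ∈ Finset.range (m+1), bb n p k
      = ∑ k ∈ Finset.range (max N m + 1), (if k ≤ m then bb n p k else 0) := by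
    rw [show (∑ k ∈ Finset.range (m+1), bb n p k)
        = ∑ k ∈ Finset.range (m+1), (if k ≤ m then bb n p k else 0) from
      Finset.sum_congr rfl (fun k hk2 => by
        rw [if_pos (by simp only [Finset.mem_range] at hk2; omega)])]
    apply Finset.sum_subset
    · exact Finset.range_subset_range.mpr (by omega)
    · intro k _ hk2
      rw [if_neg (by simp only [Finset.mem_range] at hk2; omega)]
  rw [hL, hR]

lemma diff_eq (n : ℕ) (p : ℝ) (hp0 : 0 ≤ p) (hp1 : p ≤ 1) (x : ℝ) :
    ((binom n p) (Set.Iic x)).toReal - ((binom (n+1) p) (Set.Iic x)).toReal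
      = if 0 ≤ x then p * bb n p ⌊x⌋.toNat else 0 := by
  rw [binom_Iic n p hp0 hp1 x, binom_Iic (n+1) p hp0 hp1 x]
  by_cases hx : 0 ≤ x
  · rw [if_pos hx, sum_if_eq n n p le_rfl hx, sum_if_eq (n+1) (n+1) p le_rfl hx,
      ← Finset.sum_sub_distrib, telescope]
  · rw [if_neg hx]
    push_neg at hx
    have z : ∀ (N n' : ℕ), ∑ k ∈ Finset.range (N+1), (if (k:ℝ) ≤ x then bb n' p k else 0) = 0 := by
      intro N n'
      apply Finset.sum_eq_zero
      intro k _
      rw [if_neg (by push_neg; linarith [Nat.cast_nonneg (α := ℝ) k])]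
    rw [z, z]
    ring

end Stmt6Aux

open Stmt6Aux in
/-- ρ(B_{n,p}, B_{n+1,p}) = p · max_{0 ≤ k ≤ n} b_k(n,p). -/
theorem statement6 (p : ℝ) (hp0 : 0 < p) (hp1 : p < 1) (n : ℕ) (hn : 0 < n) :
    kolm (binom n p) (binom (n + 1) p) =
      p * (Finset.range (n + 1)).sup' Finset.nonempty_range_add_one
        (fun k => (n.choose k : ℝ) * p ^ k * (1 - p) ^ (n - k)) := by
  have hp0' : (0:ℝ) ≤ p := le_of_lt hp0
  have hp1' : p ≤ 1 := le_of_lt hp1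
  set M := (Finset.range (n + 1)).sup' Finset.nonempty_range_add_one
      (fun k => (n.choose k : ℝ) * p ^ k * (1 - p) ^ (n - k)) with hM
  have hMeq : M = (Finset.range (n + 1)).sup' Finset.nonempty_range_add_one (bb n p) := rfl
  have hM0 : 0 ≤ M := by
    rw [hMeq]
    exact le_trans (bb_nonneg hp0' hp1' n 0)
      (Finset.le_sup' _ (Finset.mem_range.mpr (by omega)))
  have hble : ∀ k, bb n p k ≤ M := by
    intro k
    rcases le_or_gt k n with h | h
    · rw [hMeq]
      exact Finset.le_sup' _ (Finset.mem_range.mpr (by omega))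
    · rw [bb_zero_of_gt h]; exact hM0
  have hbound : ∀ x : ℝ,
      |((binom n p) (Set.Iic x)).toReal - ((binom (n+1) p) (Set.Iic x)).toReal| ≤ p * M := by
    intro x
    rw [diff_eq n p hp0' hp1' x]
    by_cases hx : 0 ≤ x
    · rw [if_pos hx, abs_of_nonneg (mul_nonneg hp0' (bb_nonneg hp0' hp1' n _))]
      exact mul_le_mul_of_nonneg_left (hble _) hp0'
    · rw [if_neg hx, abs_zero]
      positivity
  unfold kolm
  apply le_antisymm
  · exact ciSup_le hbound
  · obtain ⟨k0, hk0mem, hk0⟩ := Finset.exists_mem_eq_sup' (Finset.nonempty_range_add_one)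
      (fun k => (n.choose k : ℝ) * p ^ k * (1 - p) ^ (n - k))
    have hval : |((binom n p) (Set.Iic (k0:ℝ))).toReal
        - ((binom (n+1) p) (Set.Iic (k0:ℝ))).toReal| = p * M := by
      rw [diff_eq n p hp0' hp1' (k0:ℝ), if_pos (by positivity)]
      have hfl : (⌊(k0:ℝ)⌋).toNat = k0 := by
        rw [Int.floor_natCast]; simp
      rw [hfl, abs_of_nonneg (by
        have := bb_nonneg hp0' hp1' n k0
        positivity)]
      rw [hM, hk0]
      rfl
    have hbdd : BddAbove (Set.range fun x : ℝ =>
        |((binom n p) (Set.Iic x)).toReal - ((binom (n+1) p) (Set.Iic x)).toReal|) := by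
      refine ⟨p * M, ?_⟩
      rintro _ ⟨x, rfl⟩
      exact hbound x
    calc p * M = |((binom n p) (Set.Iic (k0:ℝ))).toReal
        - ((binom (n+1) p) (Set.Iic (k0:ℝ))).toReal| := hval.symm
      _ ≤ _ := le_ciSup hbdd (k0:ℝ)
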